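/- In the ring R = ℤ[u]/(u² − 5u), the ideal Q = (2, u) is not a free R-module, but Q becomes free of rank one after inverting 2 (i.e., Q ⊗_R R[1/2] ≅ R[1/2] since the inclusion Q → R becomes an isomorphism after localizing at 2). -/

import Mathlib

open Polynomial

/-- The ring `R = ℤ[u]/(u² - 5u)`. -/
def MoritaExample.R : Type :=
  Polynomial ℤ ⧸ (Ideal.span {(X : Polynomial ℤ) ^ 2 - 5 * X} : Ideal (Polynomial ℤ))

noncomputable instance : CommRing MoritaExample.R := Ideal.Quotient.commRing _

/-- The image of `u` in `R = ℤ[u]/(u² - 5u)`. -/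
noncomputable def MoritaExample.u : MoritaExample.R :=
  Ideal.Quotient.mk _ (X : Polynomial ℤ)

/-- The ideal `Q = (2, u)` of `R`. -/
noncomputable def MoritaExample.Q : Ideal MoritaExample.R :=
  Ideal.span {2, MoritaExample.u}

namespace MoritaExample

/-- Evaluation at 0. -/
noncomputable def phi0 : R →+* ℤ :=
  Ideal.Quotient.lift _ (Polynomial.evalRingHom (0 : ℤ)) (by
    intro a ha
    rw [Ideal.mem_span_singleton] at ha
    obtain ⟨c, rfl⟩ := ha
    simp)

/-- Evaluation at 5. -/
noncomputable def phi5 : R →+* ℤ :=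
  Ideal.Quotient.lift _ (Polynomial.evalRingHom (5 : ℤ)) (by
    intro a ha
    rw [Ideal.mem_span_singleton] at ha
    obtain ⟨c, rfl⟩ := ha
    simp)

lemma phi0_mk (p : Polynomial ℤ) : phi0 (Ideal.Quotient.mk _ p) = p.eval 0 := rfl

lemma phi5_mk (p : Polynomial ℤ) : phi5 (Ideal.Quotient.mk _ p) = p.eval 5 := rfl

lemma phi0_u : phi0 u = 0 := by
  rw [u, phi0_mk]
  simp

lemma phi5_u : phi5 u = 5 := by
  rw [u, phi5_mk]
  simp

lemma phi0_two : phi0 2 = 2 := map_ofNat phi0 2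

lemma phi5_two : phi5 2 = 2 := map_ofNat phi5 2

lemma dvd_five (x : R) : (5 : ℤ) ∣ phi5 x - phi0 x := by
  obtain ⟨p, rfl⟩ := Ideal.Quotient.mk_surjective x
  have := Polynomial.sub_dvd_eval_sub (5 : ℤ) 0 p
  simpa [phi0_mk, phi5_mk] using this

lemma two_mem_Q : (2 : R) ∈ Q := Ideal.subset_span (by simp)

lemma u_mem_Q : u ∈ Q := Ideal.subset_span (by simp)

lemma dvd_two_of_mem_Q {x : R} (hx : x ∈ Q) : (2 : ℤ) ∣ phi0 x := by
  refine Submodule.span_induction ?_ ?_ ?_ ?_ hx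
  · rintro y (rfl | rfl)
    · rw [phi0_two]
    · rw [phi0_u]
      exact dvd_zero _
  · simp
  · intro y z _ _ hy hz
    rw [map_add]; exact dvd_add hy hz
  · intro r y _ hy
    rw [smul_eq_mul, map_mul]; exact Dvd.dvd.mul_left hy _

lemma not_principal (g : R) : Ideal.span {g} ≠ Q := by
  intro h
  have hgQ : g ∈ Q := h ▸ Ideal.mem_span_singleton_self g
  have h2 : g ∣ 2 := Ideal.mem_span_singleton.mp (h ▸ two_mem_Q)
  have hu : g ∣ u := Ideal.mem_span_singleton.mp (h ▸ u_mem_Q)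
  obtain ⟨r, hr⟩ := h2
  obtain ⟨s, hs⟩ := hu
  set a := phi0 g with ha
  set b := phi5 g with hb
  have ha2 : (2 : ℤ) ∣ a := dvd_two_of_mem_Q hgQ
  have hra : a * phi0 r = 2 := by
    have := congrArg phi0 hr
    rw [map_mul, phi0_two] at this
    exact this.symm
  have hsa : a * phi0 s = 0 := by
    have := congrArg phi0 hs
    rw [map_mul, phi0_u] at this
    exact this.symm
  have hsb : b * phi5 s = 5 := by
    have := congrArg phi5 hs
    rw [map_mul, phi5_u] at this
    exact this.symm
  -- a ≠ 0
  have haz : a ≠ 0 := by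
    intro h0
    rw [h0, zero_mul] at hra
    norm_num at hra
  -- thus phi0 s = 0
  have hs0 : phi0 s = 0 := by
    rcases mul_eq_zero.mp hsa with h' | h'
    · exact absurd h' haz
    · exact h'
  have h5s : (5 : ℤ) ∣ phi5 s := by
    have := dvd_five s
    rw [hs0, sub_zero] at this
    exact this
  obtain ⟨k, hk⟩ := h5s
  rw [hk] at hsb
  have hbk : b * k = 1 := by linarith [hsb]
  have hb1 : b = 1 ∨ b = -1 := Int.isUnit_iff.mp (IsUnit.of_mul_eq_one k hbk)
  -- a = ±2
  have hadvd : a ∣ 2 := ⟨phi0 r, hra.symm⟩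
  have hna : a.natAbs = 2 := by
    have h1 : a.natAbs ∣ (2 : ℤ).natAbs := Int.natAbs_dvd_natAbs.mpr hadvd
    have h2' : (2 : ℤ).natAbs ∣ a.natAbs := Int.natAbs_dvd_natAbs.mpr ha2
    exact Nat.dvd_antisymm h1 h2'
  have ha' : a = 2 ∨ a = -2 := by omega
  have h5ba : (5 : ℤ) ∣ b - a := dvd_five g
  rcases ha' with h' | h' <;> rcases hb1 with h'' | h'' <;> omega

instance : Nontrivial R := phi0.domain_nontrivial

lemma not_free : ¬ Module.Free R Q := by
  intro hfree
  let b := Module.Free.chooseBasis R Q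
  set ι := Module.Free.ChooseBasisIndex R Q with hι
  rcases subsingleton_or_nontrivial ι with hsub | hnt
  · -- Q is principal: generated by at most one element
    rcases isEmpty_or_nonempty ι with he | hne
    · -- Q = span {0}
      refine not_principal 0 ?_
      have : Subsingleton Q := b.repr.toEquiv.subsingleton
      apply le_antisymm
      · rw [Ideal.span_le]
        rintro x (rfl : x = 0)
        exact Q.zero_mem
      · intro x hx
        have : (⟨x, hx⟩ : Q) = 0 := Subsingleton.elim _ _
        have hx0 : x = 0 := congrArg Subtype.val this
        rw [hx0]
        exact Ideal.zero_mem _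
    · haveI : Unique ι := ⟨⟨hne.some⟩, fun a => Subsingleton.elim _ _⟩
      refine not_principal (b default).val ?_
      apply le_antisymm
      · rw [Ideal.span_le]
        rintro x (rfl : x = (b default).val)
        exact (b default).2
      · intro x hx
        set c := b.repr ⟨x, hx⟩ default with hc
        have key : (⟨x, hx⟩ : Q) = c • b default := by
          apply b.repr.injective
          rw [map_smul, b.repr_self]
          apply Finsupp.unique_ext
          simp [hc]
        rw [Ideal.mem_span_singleton]
        refine ⟨c, ?_⟩
        have := congrArg Subtype.val key
        simpa [mul_comm] using this
  · -- two basis elements: contradiction with commutativity relation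
    obtain ⟨i, j, hij⟩ := exists_pair_ne ι
    have hxy : ((b j : R)) • (b i) = ((b i : R)) • (b j) := by
      apply Subtype.ext
      simp [mul_comm]
    have h1 := congrArg (fun z => b.repr z j) hxy
    simp only [map_smul, Module.Basis.repr_self, Finsupp.smul_apply, Finsupp.single_apply,
      smul_eq_mul] at h1
    simp only [if_true, mul_zero, mul_one] at h1
    rw [if_neg hij] at h1
    exact b.ne_zero i (Subtype.ext (by simpa using h1.symm))

end MoritaExample

/-- In `R = ℤ[u]/(u² - 5u)`, the ideal `Q = (2, u)` is not free as an `R`-module, but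
becomes free of rank one after inverting `2`: the inclusion `Q → R` becomes an
isomorphism after localizing at the powers of `2`. -/
theorem MoritaExample.Q_not_free_but_locally_free :
    ¬ Module.Free MoritaExample.R MoritaExample.Q ∧
      Function.Bijective
        (LocalizedModule.map (Submonoid.powers (2 : MoritaExample.R))
          (MoritaExample.Q.subtype)) := by
  constructor
  · exact MoritaExample.not_free
  constructor
  · exact LocalizedModule.map_injective _ _ Subtype.coe_injective
  · intro z
    induction z using LocalizedModule.induction_on with
    | h r s =>
      refine ⟨LocalizedModule.mk ⟨2 * r, Ideal.mul_mem_right r _ MoritaExample.two_mem_Q⟩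
        (⟨2, 1, pow_one 2⟩ * s), ?_⟩
      rw [LocalizedModule.map_mk]
      rw [LocalizedModule.mk_eq]
      refine ⟨1, ?_⟩
      simp only [one_smul, Submonoid.smul_def, Submonoid.coe_mul, smul_eq_mul,
        Submodule.coe_subtype, Submodule.subtype_apply]
      ring
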